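/- Let n ≥ 3 be an integer and suppose 3π/4 − π/(2n) < α < π < γ < 5π/4 − π/(2n) and 2π − π/n < α + γ. Then the axis of the quadratic f(x) = x² − cot(π/n)(cot α + cot γ)x − cot α cot γ, namely (1/2)·cot(π/n)·(cot α + cot γ), is strictly greater than (1/2)·cot(π/n)·(cot α + cot(dgn_n(α))) whenever γ < dgn_n(α), and moreover (1/2)·cot(π/n)·(cot α + cot(dgn_n(α))) = −sec(π/n)·(sin(π/n)+1)·cot α. -/

import Mathlib

open Real

set_option maxHeartbeats 800000

noncomputable def dgn (n : ℕ) (α : ℝ) : ℝ :=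
  π - Real.arctan ((Real.cos (π/n))^2 * ((Real.sin (π/n) + 1)^2)⁻¹ * Real.tan α)

theorem stmt10 (n : ℕ) (hn : 3 ≤ n) (α γ : ℝ)
    (h1 : 3*π/4 - π/(2*n) < α) (h2 : α < π) (h3 : π < γ) (h4 : γ < 5*π/4 - π/(2*n))
    (h5 : 2*π - π/n < α + γ) :
    (γ < dgn n α →
      (1/2) * Real.cot (π/n) * (Real.cot α + Real.cot γ)
        > (1/2) * Real.cot (π/n) * (Real.cot α + Real.cot (dgn n α))) ∧
    (1/2) * Real.cot (π/n) * (Real.cot α + Real.cot (dgn n α))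
      = -(Real.cos (π/n))⁻¹ * (Real.sin (π/n) + 1) * Real.cot α := by
  have hπ := Real.pi_pos
  have hn3 : (3:ℝ) ≤ (n:ℝ) := by exact_mod_cast hn
  have hnpos : (0:ℝ) < (n:ℝ) := by linarith
  have hθpos : 0 < π/n := by positivity
  have hθlt : π/n < π/2 := by
    rw [div_lt_div_iff₀ hnpos (by norm_num)]
    nlinarith
  have hc0 : 0 < Real.cos (π/n) :=
    Real.cos_pos_of_mem_Ioo ⟨by linarith, hθlt⟩
  have hs : 0 < Real.sin (π/n) :=
    Real.sin_pos_of_pos_of_lt_pi hθpos (by linarith)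
  have hθ2 : π/(2*n) ≤ π/6 := by
    rw [div_le_div_iff₀ (by positivity) (by norm_num)]
    nlinarith
  have hαgt : π/2 < α := by linarith
  have hsinα : 0 < Real.sin α := Real.sin_pos_of_pos_of_lt_pi (by linarith) h2
  have hcosα : Real.cos α < 0 := Real.cos_neg_of_pi_div_two_lt_of_lt hαgt (by linarith)
  have htanα : Real.tan α < 0 := by
    rw [Real.tan_eq_sin_div_cos]
    exact div_neg_of_pos_of_neg hsinα hcosα
  set t : ℝ := (Real.cos (π/n))^2 * ((Real.sin (π/n) + 1)^2)⁻¹ * Real.tan α with ht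
  have htneg : t < 0 := by
    have : 0 < (Real.cos (π/n))^2 * ((Real.sin (π/n) + 1)^2)⁻¹ := by positivity
    exact mul_neg_of_pos_of_neg this htanα
  have hat : Real.arctan t < 0 := by
    have := Real.arctan_strictMono htneg
    simpa [Real.arctan_zero] using this
  have hatgt : -(π/2) < Real.arctan t := Real.neg_pi_div_two_lt_arctan t
  have hdgn_gt : π < dgn n α := by
    rw [dgn]; simp only [← ht]; linarith
  have hdgn_lt : dgn n α < π + π/2 := by
    rw [dgn]; simp only [← ht]; linarith
  have hcot_dgn : Real.cot (dgn n α) = -t⁻¹ := by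
    rw [dgn]
    simp only [← ht]
    rw [Real.cot_eq_cos_div_sin, Real.cos_pi_sub, Real.sin_pi_sub,
      Real.cos_arctan, Real.sin_arctan]
    have hsq : (0:ℝ) < Real.sqrt (1 + t^2) := Real.sqrt_pos.2 (by positivity)
    field_simp
  have hcotθ : Real.cot (π/n) = Real.cos (π/n) / Real.sin (π/n) :=
    Real.cot_eq_cos_div_sin _
  have hcotα : Real.cot α = Real.cos α / Real.sin α := Real.cot_eq_cos_div_sin _
  have hpyth : Real.sin (π/n) ^ 2 + Real.cos (π/n) ^ 2 = 1 := Real.sin_sq_add_cos_sq _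
  have heq : (1/2) * Real.cot (π/n) * (Real.cot α + Real.cot (dgn n α))
      = -(Real.cos (π/n))⁻¹ * (Real.sin (π/n) + 1) * Real.cot α := by
    rw [hcot_dgn, ht, Real.tan_eq_sin_div_cos, hcotθ, hcotα]
    have h1' : Real.sin (π/n) + 1 ≠ 0 := by positivity
    field_simp
    linear_combination Real.cos α * hpyth
  refine ⟨fun hγ => ?_, heq⟩
  -- cot γ > cot (dgn n α)
  have hshift : ∀ z : ℝ, Real.cot (z + π) = Real.cos z / Real.sin z := by
    intro z
    rw [Real.cot_eq_cos_div_sin, Real.cos_add_pi, Real.sin_add_pi, neg_div_neg_eq]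
  have hx : Real.cot γ = Real.cos (γ - π) / Real.sin (γ - π) := by
    have := hshift (γ - π); rwa [sub_add_cancel] at this
  have hy : Real.cot (dgn n α) = Real.cos (dgn n α - π) / Real.sin (dgn n α - π) := by
    have := hshift (dgn n α - π); rwa [sub_add_cancel] at this
  set x := γ - π with hxdef
  set y := dgn n α - π with hydef
  have hx0 : 0 < x := by simp [hxdef]; linarith
  have hxy : x < y := by simp [hxdef, hydef]; linarith
  have hy2 : y < π/2 := by simp [hydef]; linarith
  have hsx : 0 < Real.sin x := Real.sin_pos_of_pos_of_lt_pi hx0 (by linarith)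
  have hsy : 0 < Real.sin y := Real.sin_pos_of_pos_of_lt_pi (by linarith) (by linarith)
  have hsin_sub : 0 < Real.sin (y - x) :=
    Real.sin_pos_of_pos_of_lt_pi (by linarith) (by linarith)
  have hkey : Real.cos y / Real.sin y < Real.cos x / Real.sin x := by
    rw [div_lt_div_iff₀ hsy hsx]
    have := Real.sin_sub y x
    nlinarith
  have hcc : Real.cot (dgn n α) < Real.cot γ := by
    rw [hx, hy]; exact hkey
  have hcotθpos : 0 < Real.cot (π/n) := by
    rw [hcotθ]; positivity
  nlinarith [hcc, hcotθpos]
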